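/- Identify S^1 with the unit circle in ℂ, and let A = S^1 × [0,1] be the annulus. Define the Dehn twist τ : A → A by τ(z,t) = (exp(2πit)·z, t); τ is a homeomorphism of A fixing the boundary S^1 × {0,1} pointwise. Then the quotient topological space of A × [0,1] by the equivalence relation generated by ((z,a),t) ~ ((z,a),t') for all z ∈ S^1, a ∈ {0,1}, t,t' ∈ [0,1], and ((z,s),1) ~ (τ(z,s),0) for all (z,s) ∈ A, is homeomorphic to the unit sphere S^3 in EuclideanSpace ℝ (Fin 4). -/

import Mathlib

open Metric unitInterval

noncomputable section

/-- The unit sphere of dimension `m` in `EuclideanSpace ℝ (Fin (m+1))`. -/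
def Sph (m : ℕ) : Set (EuclideanSpace ℝ (Fin (m + 1))) := Metric.sphere 0 1

/-- The Dehn twist along the core circle of the annulus `S¹ × [0,1]`
(with `S¹` the unit circle in `ℂ`): `τ(z,t) = (exp(2πit)·z, t)`. -/
noncomputable def dehnTwist (p : Circle × I) : Circle × I :=
  (Circle.exp (2 * Real.pi * (p.2 : ℝ)) * p.1, p.2)

/-- The relation generating the open book quotient on the annulus page with monodromy
the Dehn twist: `((z,a),t) ~ ((z,a),t')` for `a ∈ {0,1}`, and
`((z,s),1) ~ (τ(z,s),0)`. -/
def hopfObRel (p q : (Circle × I) × I) : Prop :=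
  (p.1 = q.1 ∧ (p.1.2 = 0 ∨ p.1.2 = 1)) ∨
  (p.2 = 1 ∧ q.2 = 0 ∧ q.1 = dehnTwist p.1)

namespace HopfOB

open Complex

/-- First complex coordinate of the map to `S³ ⊂ ℂ²`. -/
noncomputable def w1 (p : (Circle × I) × I) : ℂ :=
  (Real.sqrt p.1.2 : ℝ) *
    (Complex.exp (((2 * Real.pi * p.2 * (p.1.2 - 1) : ℝ) : ℂ) * Complex.I) * (p.1.1 : ℂ))

/-- Second complex coordinate of the map to `S³ ⊂ ℂ²`. -/
noncomputable def w2 (p : (Circle × I) × I) : ℂ :=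
  (Real.sqrt (1 - p.1.2) : ℝ) *
    (Complex.exp (((-(2 * Real.pi * p.2 * p.1.2) : ℝ) : ℂ) * Complex.I) *
      (starRingEnd ℂ) (p.1.1 : ℂ))

/-- The map from the annulus open book data to `ℝ⁴`. -/
noncomputable def hopfMap (p : (Circle × I) × I) : EuclideanSpace ℝ (Fin 4) :=
  (EuclideanSpace.equiv (Fin 4) ℝ).symm ![(w1 p).re, (w1 p).im, (w2 p).re, (w2 p).im]

lemma abs_w1 (p : (Circle × I) × I) : ‖w1 p‖ = Real.sqrt p.1.2 := by
  rw [w1, norm_mul, norm_mul, Complex.norm_real, Complex.norm_exp_ofReal_mul_I,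
    Circle.norm_coe, mul_one, mul_one, Real.norm_eq_abs, _root_.abs_of_nonneg (Real.sqrt_nonneg _)]

lemma abs_w2 (p : (Circle × I) × I) : ‖w2 p‖ = Real.sqrt (1 - p.1.2) := by
  rw [w2, norm_mul, norm_mul, Complex.norm_real, Complex.norm_exp_ofReal_mul_I,
    Complex.norm_conj, Circle.norm_coe, mul_one, mul_one,
    Real.norm_eq_abs, _root_.abs_of_nonneg (Real.sqrt_nonneg _)]

lemma normSq_w1 (p : (Circle × I) × I) : normSq (w1 p) = p.1.2 := by
  rw [← Complex.sq_norm, abs_w1, Real.sq_sqrt p.1.2.2.1]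

lemma normSq_w2 (p : (Circle × I) × I) : normSq (w2 p) = 1 - p.1.2 := by
  rw [← Complex.sq_norm, abs_w2, Real.sq_sqrt (by linarith [p.1.2.2.2])]

lemma hopfMap_mem (p : (Circle × I) × I) : hopfMap p ∈ Sph 3 := by
  have : ‖hopfMap p‖ = 1 := by
    rw [EuclideanSpace.norm_eq]
    have h4 : ∀ i : Fin 4, ‖hopfMap p i‖ ^ 2
        = ‖(![(w1 p).re, (w1 p).im, (w2 p).re, (w2 p).im] : Fin 4 → ℝ) i‖ ^ 2 :=
      fun i => rfl
    rw [Finset.sum_congr rfl (fun i _ => h4 i), Fin.sum_univ_four]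
    have e1 := normSq_w1 p
    have e2 := normSq_w2 p
    rw [normSq_apply] at e1 e2
    simp only [Matrix.cons_val_zero, Matrix.cons_val_one, Matrix.head_cons,
      Matrix.cons_val_two, Matrix.tail_cons, Matrix.cons_val_three, Real.norm_eq_abs,
      _root_.sq_abs]
    rw [show (w1 p).re ^ 2 + (w1 p).im ^ 2 + (w2 p).re ^ 2 + (w2 p).im ^ 2
        = ((w1 p).re * (w1 p).re + (w1 p).im * (w1 p).im)
          + ((w2 p).re * (w2 p).re + (w2 p).im * (w2 p).im) by ring, e1, e2]
    simp
  exact mem_sphere_zero_iff_norm.2 this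

lemma continuous_subI : Continuous (fun p : (Circle × I) × I => (p.1.2 : ℝ)) :=
  continuous_subtype_val.comp (continuous_snd.comp continuous_fst)

lemma continuous_tI : Continuous (fun p : (Circle × I) × I => (p.2 : ℝ)) :=
  continuous_subtype_val.comp continuous_snd

lemma continuous_zC : Continuous (fun p : (Circle × I) × I => (p.1.1 : ℂ)) :=
  continuous_subtype_val.comp (continuous_fst.comp continuous_fst)

lemma continuous_w1 : Continuous w1 := by
  unfold w1
  apply Continuous.mul
  · exact Complex.continuous_ofReal.comp (Real.continuous_sqrt.comp continuous_subI)
  · apply Continuous.mul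
    · apply Complex.continuous_exp.comp
      apply Continuous.mul _ continuous_const
      exact Complex.continuous_ofReal.comp
        (((continuous_const.mul continuous_tI).mul (continuous_subI.sub continuous_const)))
    · exact continuous_zC

lemma continuous_w2 : Continuous w2 := by
  unfold w2
  apply Continuous.mul
  · exact Complex.continuous_ofReal.comp
      (Real.continuous_sqrt.comp (continuous_const.sub continuous_subI))
  · apply Continuous.mul
    · apply Complex.continuous_exp.comp
      apply Continuous.mul _ continuous_const
      exact Complex.continuous_ofReal.comp
        (((continuous_const.mul continuous_tI).mul continuous_subI).neg)
    · exact Complex.continuous_conj.comp continuous_zC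

lemma continuous_hopfMap : Continuous hopfMap := by
  unfold hopfMap
  refine Continuous.comp (f := fun p => ![(w1 p).re, (w1 p).im, (w2 p).re, (w2 p).im])
    (EuclideanSpace.equiv (Fin 4) ℝ).symm.continuous ?_
  apply continuous_pi
  intro i
  fin_cases i
  · exact Complex.continuous_re.comp continuous_w1
  · exact Complex.continuous_im.comp continuous_w1
  · exact Complex.continuous_re.comp continuous_w2
  · exact Complex.continuous_im.comp continuous_w2

lemma conj_cexp (a : ℝ) :
    (starRingEnd ℂ) (Complex.exp ((a : ℂ) * Complex.I)) =
      Complex.exp (((-a : ℝ) : ℂ) * Complex.I) := by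
  rw [← Complex.exp_conj, map_mul, Complex.conj_ofReal, Complex.conj_I]
  push_cast
  ring_nf

lemma cexp_eq_cexp (a b : ℝ) (n : ℤ) (h : a = b + 2 * Real.pi * n) :
    Complex.exp ((a : ℂ) * Complex.I) = Complex.exp ((b : ℂ) * Complex.I) := by
  rw [Complex.exp_eq_exp_iff_exists_int]
  exact ⟨n, by rw [h]; push_cast; ring⟩

lemma hopfMap_eq_iff {p q : (Circle × I) × I} :
    hopfMap p = hopfMap q ↔ w1 p = w1 q ∧ w2 p = w2 q := by
  constructor
  · intro h
    have h0 : (w1 p).re = (w1 q).re := congrArg (fun x : EuclideanSpace ℝ (Fin 4) => x 0) h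
    have h1 : (w1 p).im = (w1 q).im := congrArg (fun x : EuclideanSpace ℝ (Fin 4) => x 1) h
    have h2 : (w2 p).re = (w2 q).re := congrArg (fun x : EuclideanSpace ℝ (Fin 4) => x 2) h
    have h3 : (w2 p).im = (w2 q).im := congrArg (fun x : EuclideanSpace ℝ (Fin 4) => x 3) h
    exact ⟨Complex.ext h0 h1, Complex.ext h2 h3⟩
  · rintro ⟨h1, h2⟩
    unfold hopfMap
    rw [h1, h2]

lemma hopfMap_sound {p q : (Circle × I) × I} (h : hopfObRel p q) : hopfMap p = hopfMap q := by
  obtain ⟨⟨z, s⟩, t⟩ := p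
  obtain ⟨⟨z', s'⟩, t'⟩ := q
  rw [hopfMap_eq_iff]
  rcases h with ⟨heq, h01⟩ | ⟨ht1, ht0, hq⟩
  · obtain ⟨rfl, rfl⟩ : z = z' ∧ s = s' := by
      simpa [Prod.ext_iff] using heq
    rcases h01 with h0 | h1
    · simp only at h0
      subst h0
      constructor
      · unfold w1
        norm_num
      · unfold w2
        norm_num
    · simp only at h1
      subst h1
      constructor
      · unfold w1
        norm_num
      · unfold w2
        norm_num
  · simp only at ht1 ht0
    subst ht1 ht0
    obtain ⟨hz, hs⟩ : z' = Circle.exp (2 * Real.pi * (s : ℝ)) * z ∧ s' = s := by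
      simpa [dehnTwist, Prod.ext_iff] using hq
    obtain rfl : s = s' := hs.symm
    subst hz
    constructor
    · unfold w1
      simp only [Circle.coe_mul, Circle.coe_exp, Set.Icc.coe_one, Set.Icc.coe_zero]
      rw [show ((2 * Real.pi * (1:ℝ) * ((s:ℝ) - 1) : ℝ) : ℂ) * Complex.I
          = ((2 * Real.pi * (s:ℝ) - 2 * Real.pi : ℝ) : ℂ) * Complex.I by push_cast; ring,
        cexp_eq_cexp _ (2 * Real.pi * (0:ℝ) * ((s:ℝ) - 1) + 2 * Real.pi * (s:ℝ)) (-1)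
          (by push_cast; ring), Complex.ofReal_add, add_mul, Complex.exp_add]
      ring
    · unfold w2
      simp only [Circle.coe_mul, Circle.coe_exp, Set.Icc.coe_one, Set.Icc.coe_zero, map_mul]
      rw [conj_cexp]
      rw [show ((-(2 * Real.pi * (1:ℝ) * (s:ℝ)) : ℝ) : ℂ) * Complex.I
          = ((-(2 * Real.pi * (0:ℝ) * (s:ℝ)) + -(2 * Real.pi * (s:ℝ)) : ℝ) : ℂ) * Complex.I
          by push_cast; ring, Complex.ofReal_add, add_mul, Complex.exp_add]
      ring

lemma hopfMap_inj {p q : (Circle × I) × I} (h : hopfMap p = hopfMap q) :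
    Relation.EqvGen hopfObRel p q := by
  obtain ⟨hw1, hw2⟩ := hopfMap_eq_iff.mp h
  obtain ⟨⟨z, s⟩, t⟩ := p
  obtain ⟨⟨z', s'⟩, t'⟩ := q
  -- the two `s`-coordinates agree
  have hss' : (s : ℝ) = (s' : ℝ) := by
    have habs := congrArg (‖·‖) hw1
    rw [abs_w1, abs_w1] at habs
    rw [← Real.sq_sqrt s.2.1, ← Real.sq_sqrt s'.2.1]
    exact congrArg (· ^ 2) habs
  obtain rfl : s = s' := Subtype.ext hss'
  unfold w1 at hw1
  unfold w2 at hw2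
  simp only at hw1 hw2
  by_cases hs0 : (s : ℝ) = 0
  · -- on the binding component `s = 0` the `t`-coordinate is collapsed
    rw [hs0] at hw2
    norm_num at hw2
    obtain rfl : z = z' := Circle.coe_injective ((starRingEnd ℂ).injective hw2)
    exact Relation.EqvGen.rel _ _ (Or.inl ⟨rfl, Or.inl (Subtype.ext hs0)⟩)
  by_cases hs1 : (s : ℝ) = 1
  · rw [hs1] at hw1
    norm_num at hw1
    obtain rfl : z = z' := Circle.coe_injective hw1
    exact Relation.EqvGen.rel _ _ (Or.inl ⟨rfl, Or.inr (Subtype.ext hs1)⟩)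
  -- interior case
  have hs0' : 0 < (s : ℝ) := lt_of_le_of_ne s.2.1 (Ne.symm hs0)
  have hs1' : (s : ℝ) < 1 := lt_of_le_of_ne s.2.2 hs1
  have hz : (z : ℂ) ≠ 0 := Circle.coe_ne_zero z
  have hz' : (z' : ℂ) ≠ 0 := Circle.coe_ne_zero z'
  have hsne : ((Real.sqrt s : ℝ) : ℂ) ≠ 0 := by
    exact_mod_cast Real.sqrt_ne_zero'.mpr hs0'
  have hsne' : ((Real.sqrt (1 - s) : ℝ) : ℂ) ≠ 0 := by
    exact_mod_cast Real.sqrt_ne_zero'.mpr (by linarith)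
  have hA := mul_left_cancel₀ hsne hw1
  have hB := mul_left_cancel₀ hsne' hw2
  -- conjugate the second equation
  have hB' : Complex.exp (((2 * Real.pi * t * s : ℝ) : ℂ) * Complex.I) * (z : ℂ)
      = Complex.exp (((2 * Real.pi * t' * s : ℝ) : ℂ) * Complex.I) * (z' : ℂ) := by
    have hc := congrArg (starRingEnd ℂ) hB
    simp only [map_mul, conj_cexp, Complex.conj_conj, neg_neg] at hc
    exact hc
  -- combine the two equations
  have h6 := congrArg₂ (· * ·) hA hB'.symm
  have h8 : Complex.exp (((2 * Real.pi * t * (s - 1) : ℝ) : ℂ) * Complex.I)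
        * Complex.exp (((2 * Real.pi * t' * s : ℝ) : ℂ) * Complex.I)
      = Complex.exp (((2 * Real.pi * t' * (s - 1) : ℝ) : ℂ) * Complex.I)
        * Complex.exp (((2 * Real.pi * t * s : ℝ) : ℂ) * Complex.I) :=
    mul_right_cancel₀ (mul_ne_zero hz hz') (by linear_combination h6)
  rw [← Complex.exp_add, ← Complex.exp_add, Complex.exp_eq_exp_iff_exists_int] at h8
  obtain ⟨n, hn⟩ := h8
  have him := congrArg Complex.im hn
  simp only [Complex.add_im, Complex.mul_im, Complex.ofReal_re, Complex.ofReal_im,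
    Complex.I_im, Complex.I_re, Complex.intCast_re, Complex.intCast_im, Complex.mul_re,
    Complex.re_ofNat, Complex.im_ofNat] at him
  have key : 2 * Real.pi * ((t' : ℝ) - t) = 2 * Real.pi * (n : ℝ) := by
    linear_combination him
  have htn : (t' : ℝ) - t = (n : ℝ) :=
    mul_left_cancel₀ (by positivity : (2 * Real.pi) ≠ 0) key
  have hnlb : (-1 : ℤ) ≤ n := by
    have : (-1 : ℝ) ≤ (n : ℝ) := by
      rw [← htn]; linarith [t.2.2, t'.2.1]
    exact_mod_cast this
  have hnub : n ≤ (1 : ℤ) := by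
    have : (n : ℝ) ≤ 1 := by
      rw [← htn]; linarith [t.2.1, t'.2.2]
    exact_mod_cast this
  interval_cases n
  · -- n = -1 : here t = 1, t' = 0 and q is the Dehn twist of p
    have hT : (t : ℝ) = 1 := by
      push_cast at htn
      linarith [t.2.2, t'.2.1]
    have hT' : (t' : ℝ) = 0 := by
      push_cast at htn
      linarith [t.2.2, t'.2.1]
    rw [hT, hT'] at hB'
    norm_num at hB'
    refine Relation.EqvGen.rel _ _ (Or.inr ⟨Subtype.ext hT, Subtype.ext hT', ?_⟩)
    refine Prod.ext ?_ rfl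
    show z' = Circle.exp (2 * Real.pi * (s : ℝ)) * z
    refine Circle.coe_injective ?_
    rw [Circle.coe_mul, Circle.coe_exp]
    push_cast
    exact hB'.symm
  · -- n = 0 : the two points coincide
    have hT : (t : ℝ) = (t' : ℝ) := by
      push_cast at htn
      linarith
    obtain rfl : t = t' := Subtype.ext hT
    obtain rfl : z = z' :=
      Circle.coe_injective (mul_left_cancel₀ (Complex.exp_ne_zero _) hA)
    exact Relation.EqvGen.refl _
  · -- n = 1 : here t' = 1, t = 0 and p is the Dehn twist of q
    have hT : (t : ℝ) = 0 := by
      push_cast at htn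
      linarith [t.2.1, t'.2.2]
    have hT' : (t' : ℝ) = 1 := by
      push_cast at htn
      linarith [t.2.1, t'.2.2]
    rw [hT, hT'] at hB'
    norm_num at hB'
    refine Relation.EqvGen.symm _ _ ?_
    refine Relation.EqvGen.rel _ _ (Or.inr ⟨Subtype.ext hT', Subtype.ext hT, ?_⟩)
    refine Prod.ext ?_ rfl
    show z = Circle.exp (2 * Real.pi * (s : ℝ)) * z'
    refine Circle.coe_injective ?_
    rw [Circle.coe_mul, Circle.coe_exp]
    push_cast
    exact hB'

lemma exists_exp {u : ℂ} (hu : ‖u‖ = 1) :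
    ∃ t : ℝ, 0 ≤ t ∧ t ≤ 1 ∧ Complex.exp (((2 * Real.pi * t : ℝ) : ℂ) * Complex.I) = u := by
  have h2π : (0 : ℝ) < 2 * Real.pi := by positivity
  have harg : Complex.exp ((u.arg : ℂ) * Complex.I) = u := by
    have h := Complex.norm_mul_exp_arg_mul_I u
    rw [hu] at h
    simpa using h
  rcases le_or_gt 0 u.arg with h | h
  · refine ⟨u.arg / (2 * Real.pi), by positivity, ?_, ?_⟩
    · rw [div_le_one h2π]
      linarith [Complex.arg_le_pi u, Real.pi_pos]
    · rw [show (2 * Real.pi * (u.arg / (2 * Real.pi)) : ℝ) = u.arg by field_simp]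
      exact harg
  · refine ⟨u.arg / (2 * Real.pi) + 1, ?_, ?_, ?_⟩
    · have hle : (-1 : ℝ) ≤ u.arg / (2 * Real.pi) := by
        rw [le_div_iff₀ h2π]
        linarith [Complex.neg_pi_lt_arg u, Real.pi_pos]
      linarith
    · have : u.arg / (2 * Real.pi) < 0 := div_neg_of_neg_of_pos h h2π
      linarith
    · have harg2 : (2 * Real.pi * (u.arg / (2 * Real.pi) + 1) : ℝ) = u.arg + 2 * Real.pi := by
        field_simp
      rw [show ((2 * Real.pi * (u.arg / (2 * Real.pi) + 1) : ℝ) : ℂ) * Complex.I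
          = (u.arg : ℂ) * Complex.I + 2 * (Real.pi : ℂ) * Complex.I by
            rw [harg2]; push_cast; ring,
        Complex.exp_add, harg, Complex.exp_two_pi_mul_I, mul_one]

lemma hopfMap_eq_of (p : (Circle × I) × I) (x : EuclideanSpace ℝ (Fin 4))
    (h1 : w1 p = x 0 + x 1 * Complex.I) (h2 : w2 p = x 2 + x 3 * Complex.I) :
    hopfMap p = x := by
  ext i
  fin_cases i
  · show (w1 p).re = x 0
    rw [h1]; simp
  · show (w1 p).im = x 1
    rw [h1]; simp
  · show (w2 p).re = x 2
    rw [h2]; simp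
  · show (w2 p).im = x 3
    rw [h2]; simp

lemma hopfMap_surj {x : EuclideanSpace ℝ (Fin 4)} (hx : x ∈ Sph 3) :
    ∃ p, hopfMap p = x := by
  have hnorm : ‖x‖ = 1 := mem_sphere_zero_iff_norm.1 hx
  have hsum : (x 0) ^ 2 + (x 1) ^ 2 + (x 2) ^ 2 + (x 3) ^ 2 = 1 := by
    have h := hnorm
    rw [EuclideanSpace.norm_eq, Fin.sum_univ_four, Real.sqrt_eq_one] at h
    simpa [Real.norm_eq_abs, _root_.sq_abs] using h
  set u₁ : ℂ := x 0 + x 1 * Complex.I with hu₁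
  set u₂ : ℂ := x 2 + x 3 * Complex.I with hu₂
  set a : ℝ := (x 0) ^ 2 + (x 1) ^ 2 with ha
  have hns1 : Complex.normSq u₁ = a := by
    rw [hu₁, Complex.normSq_add_mul_I]
  have hns2 : Complex.normSq u₂ = 1 - a := by
    rw [hu₂, Complex.normSq_add_mul_I]
    rw [ha]; linarith
  have ha0 : 0 ≤ a := by positivity
  have ha1 : a ≤ 1 := by
    nlinarith [sq_nonneg (x 2), sq_nonneg (x 3)]
  have habs1 : ‖u₁‖ = Real.sqrt a := by
    rw [Complex.norm_def, hns1]
  have habs2 : ‖u₂‖ = Real.sqrt (1 - a) := by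
    rw [Complex.norm_def, hns2]
  by_cases hA : a = 0
  · -- binding component s = 0
    have hx0 : x 0 = 0 := by nlinarith [sq_nonneg (x 0), sq_nonneg (x 1)]
    have hx1 : x 1 = 0 := by nlinarith [sq_nonneg (x 0), sq_nonneg (x 1)]
    have habs : ‖(starRingEnd ℂ) u₂‖ = 1 := by
      rw [Complex.norm_conj, Complex.norm_def, hns2, hA]
      norm_num
    refine ⟨((⟨(starRingEnd ℂ) u₂, show _ ∈ Metric.sphere (0:ℂ) 1 from
      mem_sphere_zero_iff_norm.2 (by exact habs)⟩, 0), 0), hopfMap_eq_of _ _ ?_ ?_⟩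
    · unfold w1
      rw [hx0, hx1]
      norm_num
    · unfold w2
      norm_num
      exact hu₂
  by_cases hB : a = 1
  · -- binding component s = 1
    have hb : (1 : ℝ) - a = 0 := by rw [hB]; ring
    have hx2 : x 2 = 0 := by nlinarith [sq_nonneg (x 2), sq_nonneg (x 3)]
    have hx3 : x 3 = 0 := by nlinarith [sq_nonneg (x 2), sq_nonneg (x 3)]
    have habs : ‖u₁‖ = 1 := by rw [habs1, hB]; norm_num
    refine ⟨((⟨u₁, show _ ∈ Metric.sphere (0:ℂ) 1 from
      mem_sphere_zero_iff_norm.2 (by exact habs)⟩, 1), 0),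
      hopfMap_eq_of _ _ ?_ ?_⟩
    · unfold w1
      norm_num
      exact hu₁
    · unfold w2
      rw [hx2, hx3]
      norm_num
  -- interior case
  have ha0' : 0 < a := lt_of_le_of_ne ha0 (Ne.symm hA)
  have ha1' : a < 1 := lt_of_le_of_ne ha1 hB
  set r1 : ℝ := Real.sqrt a with hr1
  set r2 : ℝ := Real.sqrt (1 - a) with hr2
  have hr1p : 0 < r1 := Real.sqrt_pos.2 ha0'
  have hr2p : 0 < r2 := Real.sqrt_pos.2 (by linarith)
  have hr1sq : r1 * r1 = a := Real.mul_self_sqrt ha0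
  have hr2sq : r2 * r2 = 1 - a := Real.mul_self_sqrt (by linarith)
  have hu1ne : u₁ ≠ 0 := by
    intro h0
    rw [h0] at hns1
    simp at hns1
    exact hA hns1.symm
  have hu2ne : u₂ ≠ 0 := by
    intro h0
    rw [h0] at hns2
    simp at hns2
    linarith
  set u : ℂ := (starRingEnd ℂ) (u₁ * u₂) / ((r1 * r2 : ℝ) : ℂ) with hu
  have habsu : ‖u‖ = 1 := by
    rw [hu, norm_div, Complex.norm_conj, norm_mul, habs1, habs2, Complex.norm_real, Real.norm_eq_abs,
      _root_.abs_of_pos (by positivity)]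
    field_simp
  obtain ⟨t, ht0, ht1, htu⟩ := exists_exp habsu
  set zc : ℂ := u₁ * Complex.exp (((-(2 * Real.pi * t * (a - 1)) : ℝ) : ℂ) * Complex.I)
      / ((r1 : ℝ) : ℂ) with hzc
  have habsz : ‖zc‖ = 1 := by
    rw [hzc, norm_div, norm_mul, habs1, Complex.norm_exp_ofReal_mul_I, Complex.norm_real, Real.norm_eq_abs,
      _root_.abs_of_pos hr1p, mul_one]
    field_simp
  have hr1ne : ((r1 : ℝ) : ℂ) ≠ 0 := by
    exact_mod_cast ne_of_gt hr1p
  have hr2ne : ((r2 : ℝ) : ℂ) ≠ 0 := by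
    exact_mod_cast ne_of_gt hr2p
  have hr1C : ((r1 : ℝ) : ℂ) * ((r1 : ℝ) : ℂ) = ((a : ℝ) : ℂ) := by
    have := congrArg (Complex.ofReal) hr1sq
    push_cast at this
    exact_mod_cast this
  have hre : (a * (1 - a) : ℝ) = (r1 * r2) * (r1 * r2) := by
    linear_combination (a - 1) * hr1sq - (r1 * r1) * hr2sq
  have hval : (u₁ * u₂) * (starRingEnd ℂ) (u₁ * u₂) = (((r1 * r2) * (r1 * r2) : ℝ) : ℂ) := by
    rw [Complex.mul_conj, map_mul, hns1, hns2, ← hre]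
  have hr12ne : (((r1 * r2 : ℝ)) : ℂ) ≠ 0 := by
    exact_mod_cast mul_ne_zero (ne_of_gt hr1p) (ne_of_gt hr2p)
  have huinv : u⁻¹ = u₁ * u₂ / (((r1 * r2) : ℝ) : ℂ) := by
    refine inv_eq_of_mul_eq_one_right ?_
    rw [hu]
    rw [div_mul_div_comm]
    rw [show (starRingEnd ℂ) (u₁ * u₂) * (u₁ * u₂) = (u₁ * u₂) * (starRingEnd ℂ) (u₁ * u₂) by
      ring, hval]
    rw [div_eq_one_iff_eq (by exact mul_ne_zero hr12ne hr12ne)]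
    push_cast
    ring
  refine ⟨((⟨zc, show _ ∈ Metric.sphere (0:ℂ) 1 from
      mem_sphere_zero_iff_norm.2 (by exact habsz)⟩,
    ⟨a, ha0, ha1⟩), ⟨t, ht0, ht1⟩), hopfMap_eq_of _ _ ?_ ?_⟩
  · -- first coordinate
    show ((r1 : ℝ) : ℂ) *
      (Complex.exp (((2 * Real.pi * t * (a - 1) : ℝ) : ℂ) * Complex.I) * zc) = u₁
    have hEE : Complex.exp (((2 * Real.pi * t * (a - 1) : ℝ) : ℂ) * Complex.I) *
        Complex.exp (((-(2 * Real.pi * t * (a - 1)) : ℝ) : ℂ) * Complex.I) = 1 := by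
      rw [← Complex.exp_add, ← Complex.exp_zero]
      congr 1
      push_cast
      ring
    rw [hzc]
    calc ((r1 : ℝ) : ℂ) * (Complex.exp (((2 * Real.pi * t * (a - 1) : ℝ) : ℂ) * Complex.I) *
          (u₁ * Complex.exp (((-(2 * Real.pi * t * (a - 1)) : ℝ) : ℂ) * Complex.I) / ((r1:ℝ):ℂ)))
        = (Complex.exp (((2 * Real.pi * t * (a - 1) : ℝ) : ℂ) * Complex.I) *
            Complex.exp (((-(2 * Real.pi * t * (a - 1)) : ℝ) : ℂ) * Complex.I)) * u₁ *
            (((r1:ℝ):ℂ) / ((r1:ℝ):ℂ)) := by ring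
      _ = u₁ := by rw [hEE, div_self hr1ne]; ring
  · -- second coordinate
    show ((r2 : ℝ) : ℂ) *
      (Complex.exp (((-(2 * Real.pi * t * a) : ℝ) : ℂ) * Complex.I) * (starRingEnd ℂ) zc) = u₂
    have hconj : (starRingEnd ℂ) zc
        = (starRingEnd ℂ) u₁ * Complex.exp (((2 * Real.pi * t * (a - 1) : ℝ) : ℂ) * Complex.I)
          / ((r1 : ℝ) : ℂ) := by
      rw [hzc, map_div₀, map_mul, conj_cexp, Complex.conj_ofReal, neg_neg]
    have hprod : Complex.exp (((-(2 * Real.pi * t * a) : ℝ) : ℂ) * Complex.I) *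
        Complex.exp (((2 * Real.pi * t * (a - 1) : ℝ) : ℂ) * Complex.I) *
        Complex.exp (((2 * Real.pi * t : ℝ) : ℂ) * Complex.I) = 1 := by
      rw [← Complex.exp_add, ← Complex.exp_add, ← Complex.exp_zero]
      congr 1
      push_cast
      ring
    have hMP : Complex.exp (((-(2 * Real.pi * t * a) : ℝ) : ℂ) * Complex.I) *
        Complex.exp (((2 * Real.pi * t * (a - 1) : ℝ) : ℂ) * Complex.I)
        = (Complex.exp (((2 * Real.pi * t : ℝ) : ℂ) * Complex.I))⁻¹ :=
      eq_inv_of_mul_eq_one_left hprod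
    have hc1 : (starRingEnd ℂ) u₁ * u₁ = ((a : ℝ) : ℂ) := by
      rw [mul_comm, Complex.mul_conj, hns1]
    rw [hconj]
    calc ((r2 : ℝ) : ℂ) * (Complex.exp (((-(2 * Real.pi * t * a) : ℝ) : ℂ) * Complex.I) *
          ((starRingEnd ℂ) u₁ *
            Complex.exp (((2 * Real.pi * t * (a - 1) : ℝ) : ℂ) * Complex.I) / ((r1:ℝ):ℂ)))
        = (Complex.exp (((-(2 * Real.pi * t * a) : ℝ) : ℂ) * Complex.I) *
            Complex.exp (((2 * Real.pi * t * (a - 1) : ℝ) : ℂ) * Complex.I)) *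
            ((starRingEnd ℂ) u₁ * ((r2:ℝ):ℂ) / ((r1:ℝ):ℂ)) := by ring
      _ = (Complex.exp (((2 * Real.pi * t : ℝ) : ℂ) * Complex.I))⁻¹ *
            ((starRingEnd ℂ) u₁ * ((r2:ℝ):ℂ) / ((r1:ℝ):ℂ)) := by rw [hMP]
      _ = (u₁ * u₂ / (((r1 * r2) : ℝ) : ℂ)) *
            ((starRingEnd ℂ) u₁ * ((r2:ℝ):ℂ) / ((r1:ℝ):ℂ)) := by rw [htu, huinv]
      _ = u₂ := by
          rw [div_mul_div_comm, div_eq_iff (mul_ne_zero hr12ne hr1ne)]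
          push_cast
          linear_combination (u₂ * ((r2:ℝ):ℂ)) * hc1 - (u₂ * ((r2:ℝ):ℂ)) * hr1C

/-- The descended map on the quotient. -/
noncomputable def f : Quot hopfObRel → ↥(Sph 3) :=
  Quot.lift (fun p => ⟨hopfMap p, hopfMap_mem p⟩)
    (fun _ _ h => Subtype.ext (hopfMap_sound h))

end HopfOB

/-- The open book with annulus page and monodromy a single Dehn twist along the core
circle has total space `S³`. -/
theorem openBook_annulus_dehnTwist_homeomorph_S3 :
    Nonempty (Quot hopfObRel ≃ₜ ↥(Sph 3)) := by
  classical
  let f := HopfOB.f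
  have hfbij : Function.Bijective f := by
    constructor
    · intro a b
      induction a using Quot.ind with | _ p =>
      induction b using Quot.ind with | _ q =>
      intro h
      have h' : HopfOB.hopfMap p = HopfOB.hopfMap q := congrArg Subtype.val h
      exact Quot.eqvGen_sound (HopfOB.hopfMap_inj h')
    · rintro ⟨x, hx⟩
      obtain ⟨p, hp⟩ := HopfOB.hopfMap_surj hx
      refine ⟨Quot.mk _ p, ?_⟩
      exact Subtype.ext hp
  have hfc : Continuous f :=
    continuous_quot_lift _ (HopfOB.continuous_hopfMap.subtype_mk _)
  exact ⟨Continuous.homeoOfEquivCompactToT2 (f := Equiv.ofBijective f hfbij) hfc⟩
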